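/- Fix matrices P, Q, R ∈ SL(2,ℂ), let G be the group generated by {P, Q, R}, and suppose the natural action of G on ℂ² is irreducible. Then G is unitary if and only if the seven traces tr(P), tr(Q), tr(R), tr(P·Q), tr(Q·R), tr(P·R), tr(P·Q·R) are all real. -/

import Mathlib

open Matrix Complex

/-- A subgroup of `SL(2,ℂ)`, viewed as a set of matrices, is *unitary* if it preserves some
nondegenerate Hermitian form `H` under `g ↦ gᴴ H g`. -/
def IsUnitarySubgroup (G : Subgroup (Matrix.SpecialLinearGroup (Fin 2) ℂ)) : Prop :=
  ∃ H : Matrix (Fin 2) (Fin 2) ℂ, H.IsHermitian ∧ H.det ≠ 0 ∧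
    ∀ g ∈ G, (g : Matrix (Fin 2) (Fin 2) ℂ)ᴴ * H * (g : Matrix (Fin 2) (Fin 2) ℂ) = H

/-- The natural action of `G ⊆ SL(2,ℂ)` on `ℂ²` is irreducible if there is no nonzero common
eigenvector. -/
def IsIrreducibleSubgroup (G : Subgroup (Matrix.SpecialLinearGroup (Fin 2) ℂ)) : Prop :=
  ¬ ∃ v : Fin 2 → ℂ, v ≠ 0 ∧ ∀ g ∈ G, ∃ c : ℂ, (g : Matrix (Fin 2) (Fin 2) ℂ) *ᵥ v = c • v

/-- The trace of an element of `SL(2,ℂ)`. -/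
noncomputable def trSL (g : Matrix.SpecialLinearGroup (Fin 2) ℂ) : ℂ :=
  Matrix.trace (g : Matrix (Fin 2) (Fin 2) ℂ)

local notation "M₂" => Matrix (Fin 2) (Fin 2) ℂ
local notation "V₂" => (Fin 2 → ℂ)



lemma adj_eq (A : M₂) : adjugate A = trace A • (1 : M₂) - A := by
  rw [adjugate_fin_two]
  ext i j
  fin_cases i <;> fin_cases j <;>
    simp [trace_fin_two, Matrix.one_apply, Matrix.smul_apply]

lemma tr_adj (U V : M₂) :
    trace (U * adjugate V) = trace U * trace V - trace (U * V) := by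
  rw [adj_eq, mul_sub, Matrix.mul_smul, mul_one, trace_sub, trace_smul]
  simp [smul_eq_mul, mul_comm]

/-- master reduction for a repeated letter -/
lemma tr_star (A B y : M₂) (hy : y.det = 1) :
    trace (A * y * (B * y)) =
      trace (A * y) * trace (B * y) - trace A * trace B + trace (A * B) := by
  have h1 : trace ((A * y) * adjugate (B * y)) =
      trace (A * y) * trace (B * y) - trace ((A * y) * (B * y)) := tr_adj _ _
  have h2 : (A * y) * adjugate (B * y) = A * adjugate B := by
    rw [adjugate_mul_distrib, show A * y * (adjugate y * adjugate B)
        = A * (y * adjugate y) * adjugate B by noncomm_ring, mul_adjugate, hy]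
    simp
  rw [h2, tr_adj] at h1
  linear_combination h1

/-- hexagon identity -/
lemma tr_hex (A B C : M₂) :
    trace (A * C * B) = trace A * trace (C * B) - trace A * trace B * trace C
      + trace (A * B) * trace C + trace B * trace (A * C) - trace (A * B * C) := by
  have e1 : trace (A * adjugate (C * B)) =
      trace A * trace (C * B) - trace (A * (C * B)) := tr_adj _ _
  have e2 : A * adjugate (C * B) = A * adjugate B * adjugate C := by
    rw [adjugate_mul_distrib, mul_assoc]
  have e3 : trace ((A * adjugate B) * adjugate C) =
      trace (A * adjugate B) * trace C - trace ((A * adjugate B) * C) := tr_adj _ _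
  have e4 : trace (A * adjugate B) = trace A * trace B - trace (A * B) := tr_adj _ _
  have e5 : trace ((A * adjugate B) * C) = trace (C * (A * adjugate B)) := trace_mul_comm _ _
  have e6 : trace ((C * A) * adjugate B) = trace (C * A) * trace B - trace (C * A * B) :=
    tr_adj _ _
  have e7 : trace (C * A) = trace (A * C) := trace_mul_comm _ _
  have e8 : trace (C * A * B) = trace (A * B * C) := by
    rw [mul_assoc, trace_mul_comm, mul_assoc]
  have e9 : C * (A * adjugate B) = (C * A) * adjugate B := by rw [mul_assoc]
  have e10 : trace (A * (C * B)) = trace (A * C * B) := by rw [mul_assoc]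
  rw [e2] at e1
  rw [e9, e6, e7, e8] at e5
  rw [e5, e4] at e3
  rw [e3, e10] at e1
  linear_combination e1



lemma exists_dup {α : Type*} : ∀ (l : List α), ¬ l.Nodup →
    ∃ (a : α) (l₁ l₂ l₃ : List α), l = l₁ ++ a :: (l₂ ++ a :: l₃) := by
  classical
  intro l
  induction l with
  | nil => intro h; exact absurd List.nodup_nil h
  | cons x t ih =>
    intro h
    by_cases hx : x ∈ t
    · obtain ⟨s, t', rfl⟩ := List.append_of_mem hx
      exact ⟨x, [], s, t', rfl⟩
    · have : ¬ t.Nodup := fun hn => h (List.nodup_cons.2 ⟨hx, hn⟩)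
      obtain ⟨a, l₁, l₂, l₃, rfl⟩ := ih this
      exact ⟨a, x :: l₁, l₂, l₃, rfl⟩

lemma tr_rot (u v : List M₂) :
    trace (u ++ v).prod = trace (v ++ u).prod := by
  rw [List.prod_append, List.prod_append, trace_mul_comm]



section
variable {A B C : M₂}

lemma traces_real (hA : A.det = 1) (hB : B.det = 1) (hC : C.det = 1)
    (h1 : (trace A).im = 0) (h2 : (trace B).im = 0) (h3 : (trace C).im = 0)
    (h4 : (trace (A * B)).im = 0) (h5 : (trace (B * C)).im = 0)
    (h6 : (trace (A * C)).im = 0) (h7 : (trace (A * B * C)).im = 0) :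
    ∀ (n : ℕ) (l : List M₂), l.length ≤ n → (∀ x ∈ l, x = A ∨ x = B ∨ x = C) →
      (trace l.prod).im = 0 := by
  classical
  have hACB : (trace (A * C * B)).im = 0 := by
    rw [tr_hex, trace_mul_comm C B]
    simp [Complex.sub_im, Complex.add_im, Complex.mul_im, h1, h2, h3, h4, h5, h6, h7]
  intro n
  induction n with
  | zero =>
    intro l hlen _
    have : l = [] := List.eq_nil_of_length_eq_zero (Nat.le_zero.1 hlen)
    subst this
    simp [trace_fin_two, Matrix.one_apply]
  | succ n IH =>
    intro l hlen hmem
    by_cases hnd : l.Nodup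
    · -- short case: length ≤ 3
      have hcard : l.length ≤ 3 := by
        have h1' : l.toFinset ⊆ ({A, B, C} : Finset M₂) := by
          intro x hx
          rcases hmem x (List.mem_toFinset.1 hx) with h | h | h <;> simp [h]
        have := Finset.card_le_card h1'
        have hc3 : ({A, B, C} : Finset M₂).card ≤ 3 := by
          apply le_trans (Finset.card_insert_le _ _)
          exact Nat.succ_le_succ (le_trans (Finset.card_insert_le _ _) (by simp))
        rw [List.toFinset_card_of_nodup hnd] at this
        omega
      match l, hnd, hmem, hcard with
      | [], _, _, _ => simp [trace_fin_two, Matrix.one_apply]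
      | [a], _, hmem, _ =>
        rcases hmem a (by simp) with h | h | h <;> subst h <;> simpa
      | [a, b], hnd, hmem, _ =>
        have hab : a ≠ b := by simp [List.nodup_cons] at hnd; tauto
        have hprod : [a, b].prod = a * b := by simp
        rw [hprod]
        rcases hmem a (by simp) with h | h | h <;> subst h <;>
          rcases hmem b (by simp) with h | h | h <;> first
          | (subst h; exact absurd rfl hab)
          | (subst h; assumption)
          | (subst h; rw [trace_mul_comm]; assumption)
      | [a, b, c], hnd, hmem, _ =>
        have hab : a ≠ b := by simp [List.nodup_cons] at hnd; tauto
        have hac : a ≠ c := by simp [List.nodup_cons] at hnd; tauto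
        have hbc : b ≠ c := by simp [List.nodup_cons] at hnd; tauto
        have hprod : [a, b, c].prod = a * b * c := by simp [mul_assoc]
        rw [hprod]
        have e_bca : trace (B * C * A) = trace (A * B * C) := by
          rw [trace_mul_comm, ← mul_assoc]
        have e_cab : trace (C * A * B) = trace (A * B * C) := by
          rw [mul_assoc, trace_mul_comm]
        have e_cba : trace (C * B * A) = trace (A * C * B) := by
          rw [trace_mul_comm, ← mul_assoc]
        have e_bac : trace (B * A * C) = trace (A * C * B) := by
          rw [mul_assoc, trace_mul_comm]
        rcases hmem a (by simp) with h | h | h <;> subst h <;>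
          rcases hmem b (by simp) with h | h | h <;>
          first
          | (subst h; exact absurd rfl hab)
          | (subst h;
             rcases hmem c (by simp) with h | h | h <;>
               first
               | (subst h; exact absurd rfl hac)
               | (subst h; exact absurd rfl hbc)
               | (subst h; first
                  | exact h7
                  | exact hACB
                  | (rw [e_bca]; exact h7)
                  | (rw [e_cab]; exact h7)
                  | (rw [e_cba]; exact hACB)
                  | (rw [e_bac]; exact hACB)))
      | _ :: _ :: _ :: _ :: _, _, _, hcard => simp at hcard; omega
    · -- duplicate case
      obtain ⟨a, l₁, l₂, l₃, rfl⟩ := exists_dup _ hnd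
      have hlen' : l₁.length + l₂.length + l₃.length + 2 ≤ n + 1 := by
        simp [List.length_append] at hlen; omega
      have hmem₁ : ∀ x ∈ l₁, x = A ∨ x = B ∨ x = C := fun x hx => hmem x (by simp [hx])
      have hmem₂ : ∀ x ∈ l₂, x = A ∨ x = B ∨ x = C := fun x hx => hmem x (by simp [hx])
      have hmem₃ : ∀ x ∈ l₃, x = A ∨ x = B ∨ x = C := fun x hx => hmem x (by simp [hx])
      have hmema : a = A ∨ a = B ∨ a = C := hmem a (by simp)
      have hdeta : a.det = 1 := by rcases hmema with h | h | h <;> subst h <;> assumption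
      have hsplit : l₁ ++ a :: (l₂ ++ a :: l₃) = (l₁ ++ a :: l₂ ++ [a]) ++ l₃ := by simp
      have h0 : trace (l₁ ++ a :: (l₂ ++ a :: l₃)).prod
          = trace ((l₃ ++ (l₁ ++ a :: l₂ ++ [a])).prod) := by
        rw [hsplit]; exact tr_rot _ _
      have hprodeq : (l₃ ++ (l₁ ++ a :: l₂ ++ [a])).prod
          = ((l₃ ++ l₁).prod * a) * (l₂.prod * a) := by
        simp [List.prod_append, List.prod_cons, mul_assoc]
      have key := tr_star ((l₃ ++ l₁).prod) (l₂.prod) a hdeta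
      rw [h0, hprodeq, key]
      have memaux : ∀ x ∈ l₃ ++ l₁ ++ [a], x = A ∨ x = B ∨ x = C := by
        intro x hx
        simp at hx
        rcases hx with h | h | h
        · exact hmem₃ x h
        · exact hmem₁ x h
        · subst h; exact hmema
      have i1 : (trace ((l₃ ++ l₁).prod * a)).im = 0 := by
        have := IH (l₃ ++ l₁ ++ [a]) (by simp; omega) memaux
        rwa [show (l₃ ++ l₁ ++ [a]).prod = (l₃ ++ l₁).prod * a by simp [mul_assoc]] at this
      have i2 : (trace (l₂.prod * a)).im = 0 := by
        have hm : ∀ x ∈ l₂ ++ [a], x = A ∨ x = B ∨ x = C := by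
          intro x hx
          simp at hx
          rcases hx with h | h
          · exact hmem₂ x h
          · exact h ▸ hmema
        have := IH (l₂ ++ [a]) (by simp; omega) hm
        rwa [show (l₂ ++ [a]).prod = l₂.prod * a by simp] at this
      have i3 : (trace ((l₃ ++ l₁).prod)).im = 0 := by
        apply IH (l₃ ++ l₁) (by simp; omega)
        intro x hx
        rcases List.mem_append.1 hx with h | h
        · exact hmem₃ x h
        · exact hmem₁ x h
      have i4 : (trace (l₂.prod)).im = 0 := IH l₂ (by omega) hmem₂
      have i5 : (trace ((l₃ ++ l₁).prod * l₂.prod)).im = 0 := by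
        have hm : ∀ x ∈ l₃ ++ l₁ ++ l₂, x = A ∨ x = B ∨ x = C := by
          intro x hx
          simp at hx
          rcases hx with h | h | h
          · exact hmem₃ x h
          · exact hmem₁ x h
          · exact hmem₂ x h
        have := IH (l₃ ++ l₁ ++ l₂) (by simp; omega) hm
        rwa [show (l₃ ++ l₁ ++ l₂).prod = (l₃ ++ l₁).prod * l₂.prod by simp [mul_assoc]] at this
      simp only [Complex.sub_im, Complex.add_im, Complex.mul_im, i1, i2, i3, i4, i5]
      ring
end



/-- orthogonal vector -/
def perp (w : V₂) : V₂ := ![w 1, -(w 0)]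

lemma perp_ne_zero {w : V₂} (hw : w ≠ 0) : perp w ≠ 0 := by
  intro h
  apply hw
  have h1 := congrFun h 0
  have h2 := congrFun h 1
  simp [perp] at h1 h2
  ext i
  fin_cases i <;> simp [h1, h2]

lemma dot_perp (w : V₂) : w ⬝ᵥ perp w = 0 := by
  simp [dotProduct, perp, Fin.sum_univ_two]; ring

lemma mem_span_perp {w x : V₂} (hw : w ≠ 0) (hx : w ⬝ᵥ x = 0) :
    ∃ c : ℂ, x = c • perp w := by
  simp [dotProduct, Fin.sum_univ_two] at hx
  by_cases h0 : w 0 ≠ 0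
  · refine ⟨-(x 1) / w 0, ?_⟩
    ext i
    fin_cases i <;> simp [perp] <;> field_simp <;> linear_combination hx
  · push_neg at h0
    have h1 : w 1 ≠ 0 := by
      intro h1; apply hw; ext i; fin_cases i <;> simp [h0, h1]
    have hx1 : x 1 = 0 := by
      rw [h0] at hx
      simp at hx
      rcases hx with h | h
      · exact absurd h h1
      · exact h
    refine ⟨x 0 / w 1, ?_⟩
    ext i
    fin_cases i <;> simp [perp, h0, hx1]
    field_simp

/-- a proper subspace of ℂ² containing a nonzero vector is its span -/
lemma onedim {T : Submodule ℂ V₂} (hT : T ≠ ⊤) {u : V₂} (hu : u ≠ 0) (huT : u ∈ T) :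
    ∀ x ∈ T, ∃ c : ℂ, x = c • u := by
  have hfin : Module.finrank ℂ V₂ = 2 := Module.finrank_fin_fun ℂ
  have hlt' := Submodule.finrank_lt (K := ℂ) hT
  rw [hfin] at hlt'
  have hsp : Submodule.span ℂ {u} ≤ T := by
    rw [Submodule.span_le]; simpa using huT
  have h1 : Module.finrank ℂ (Submodule.span ℂ {u}) = 1 := finrank_span_singleton hu
  have heq : Submodule.span ℂ {u} = T :=
    Submodule.eq_of_le_of_finrank_le hsp (by rw [h1]; omega)
  intro x hx
  have : x ∈ Submodule.span ℂ ({u} : Set V₂) := heq ▸ hx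
  obtain ⟨c, hc⟩ := Submodule.mem_span_singleton.1 this
  exact ⟨c, hc.symm⟩

/-- rank-one decomposition -/
lemma rank_one_decomp {t : M₂} (ht : t ≠ 0) {v : V₂} (hv : v ≠ 0) (htv : t *ᵥ v = 0) :
    ∃ u w : V₂, u ≠ 0 ∧ w ≠ 0 ∧ t = vecMulVec u w := by
  have hrow : ∀ i, ∃ c : ℂ, (fun j => t i j) = c • perp v := by
    intro i
    apply mem_span_perp hv
    have := congrFun htv i
    simpa [mulVec, dotProduct, mul_comm] using this
  choose c hc using hrow
  refine ⟨c, perp v, ?_, perp_ne_zero hv, ?_⟩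
  · intro h
    apply ht
    ext i j
    have h2 := congrFun (hc i) j
    rw [h] at h2
    simpa using h2
  · ext i j
    have h2 := congrFun (hc i) j
    simpa [vecMulVec] using h2



/-- span of a mul-closed set containing is mul-closed -/
lemma span_mul_mem {A : Type*} [Ring A] [Module ℂ A] [SMulCommClass ℂ A A]
    [IsScalarTower ℂ A A] {s : Set A}
    (hs : ∀ x ∈ s, ∀ y ∈ s, x * y ∈ s) :
    ∀ x ∈ Submodule.span ℂ s, ∀ y ∈ Submodule.span ℂ s, x * y ∈ Submodule.span ℂ s := by
  intro x hx
  induction hx using Submodule.span_induction with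
  | mem a ha =>
    intro y hy
    induction hy using Submodule.span_induction with
    | mem b hb => exact Submodule.subset_span (hs a ha b hb)
    | zero => simpa using Submodule.zero_mem _
    | add b c _ _ ihb ihc => rw [mul_add]; exact Submodule.add_mem _ ihb ihc
    | smul r b _ ihb => rw [mul_smul_comm]; exact Submodule.smul_mem _ r ihb
  | zero => intro y hy; simpa using Submodule.zero_mem _
  | add a b _ _ iha ihb =>
    intro y hy; rw [add_mul]; exact Submodule.add_mem _ (iha y hy) (ihb y hy)
  | smul r a _ iha =>
    intro y hy; rw [smul_mul_assoc]; exact Submodule.smul_mem _ r (iha y hy)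

lemma conj_vecMulVec (s s' u w : Matrix (Fin 2) (Fin 2) ℂ → ℂ ⊕ Unit → ℂ) : True := trivial

lemma mul_vecMulVec_mul (s s' : M₂) (u w : V₂) :
    s * vecMulVec u w * s' = vecMulVec (s *ᵥ u) (w ᵥ* s') := by
  ext i j
  simp [mul_apply, vecMulVec, mulVec, vecMul, dotProduct, Fin.sum_univ_two]
  ring

lemma matrix_sum_rows (M : M₂) :
    M = ∑ i : Fin 2, vecMulVec (Pi.single i 1) (fun j => M i j) := by
  ext i j
  simp [vecMulVec, Fin.sum_univ_two, Matrix.sum_apply]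
  fin_cases i <;> simp [Pi.single_apply]

/-- Burnside's theorem in dimension 2 -/
theorem burnside2 (A B C : M₂)
    (hirr3 : ¬ ∃ v : V₂, v ≠ 0 ∧ (∃ c : ℂ, A *ᵥ v = c • v) ∧ (∃ c : ℂ, B *ᵥ v = c • v) ∧
      (∃ c : ℂ, C *ᵥ v = c • v)) :
    Submodule.span ℂ ((Submonoid.closure {A, B, C} : Submonoid M₂) : Set M₂) = ⊤ := by
  classical
  set 𝒜 := Submodule.span ℂ ((Submonoid.closure {A, B, C} : Submonoid M₂) : Set M₂) with h𝒜
  have hclosed : ∀ x ∈ (Submonoid.closure {A, B, C} : Submonoid M₂),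
      ∀ y ∈ (Submonoid.closure {A, B, C} : Submonoid M₂),
      x * y ∈ (Submonoid.closure {A, B, C} : Submonoid M₂) := fun x hx y hy => mul_mem hx hy
  have hmul : ∀ x ∈ 𝒜, ∀ y ∈ 𝒜, x * y ∈ 𝒜 := span_mul_mem hclosed
  have hAmem : A ∈ 𝒜 := Submodule.subset_span (Submonoid.subset_closure (by simp))
  have hBmem : B ∈ 𝒜 := Submodule.subset_span (Submonoid.subset_closure (by simp))
  have hCmem : C ∈ 𝒜 := Submodule.subset_span (Submonoid.subset_closure (by simp))
  have honemem : (1 : M₂) ∈ 𝒜 := Submodule.subset_span (Submonoid.one_mem _)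
  -- find a nonscalar among A, B, C
  have hnonscalar : ∃ a ∈ 𝒜, ¬ ∃ c : ℂ, a = c • (1 : M₂) := by
    by_contra hcon
    push_neg at hcon
    apply hirr3
    refine ⟨Pi.single 0 1, by simp [Pi.single_eq_same, Function.ne_iff], ?_, ?_, ?_⟩
    · obtain ⟨c, hc⟩ := hcon A hAmem; exact ⟨c, by rw [hc, smul_mulVec, one_mulVec]⟩
    · obtain ⟨c, hc⟩ := hcon B hBmem; exact ⟨c, by rw [hc, smul_mulVec, one_mulVec]⟩
    · obtain ⟨c, hc⟩ := hcon C hCmem; exact ⟨c, by rw [hc, smul_mulVec, one_mulVec]⟩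
  obtain ⟨a, ha𝒜, hans⟩ := hnonscalar
  -- eigenvalue of a
  obtain ⟨lam, hlam⟩ := Module.End.exists_eigenvalue (Matrix.mulVecLin a)
  obtain ⟨v, hv⟩ := hlam.exists_hasEigenvector
  have hv0 : v ≠ 0 := hv.right
  have hav : a *ᵥ v = lam • v := hv.apply_eq_smul
  set t : M₂ := a - lam • 1 with ht
  have ht𝒜 : t ∈ 𝒜 := Submodule.sub_mem _ ha𝒜 (Submodule.smul_mem _ _ honemem)
  have ht0 : t ≠ 0 := by
    intro h
    exact hans ⟨lam, by rw [← sub_eq_zero]; exact h⟩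
  have htv : t *ᵥ v = 0 := by
    rw [ht, sub_mulVec, hav, smul_mulVec, one_mulVec, sub_self]
  obtain ⟨u, w, hu0, hw0, htuw⟩ := rank_one_decomp ht0 hv0 htv
  -- column space map
  let colmap : M₂ →ₗ[ℂ] V₂ :=
    { toFun := fun M => M *ᵥ u
      map_add' := fun M N => add_mulVec M N u
      map_smul' := fun c M => smul_mulVec c M u }
  let rowmap : M₂ →ₗ[ℂ] V₂ :=
    { toFun := fun M => w ᵥ* M
      map_add' := fun M N => vecMul_add M N w
      map_smul' := fun c M => by ext j; simp [vecMul, dotProduct, Fin.sum_univ_two]; ring }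
  set T := 𝒜.map colmap with hT
  set T' := 𝒜.map rowmap with hT'
  have huT : u ∈ T := ⟨1, honemem, by show (1:M₂) *ᵥ u = u; exact one_mulVec u⟩
  have hwT' : w ∈ T' := ⟨1, honemem, by simp [rowmap]⟩
  have hTtop : T = ⊤ := by
    by_contra hne
    have h1 := onedim hne hu0 huT
    apply hirr3
    refine ⟨u, hu0, ?_, ?_, ?_⟩
    · obtain ⟨c, hc⟩ := h1 (A *ᵥ u) ⟨A, hAmem, rfl⟩; exact ⟨c, hc⟩
    · obtain ⟨c, hc⟩ := h1 (B *ᵥ u) ⟨B, hBmem, rfl⟩; exact ⟨c, hc⟩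
    · obtain ⟨c, hc⟩ := h1 (C *ᵥ u) ⟨C, hCmem, rfl⟩; exact ⟨c, hc⟩
  have hT'top : T' = ⊤ := by
    by_contra hne
    have h1 := onedim hne hw0 hwT'
    apply hirr3
    refine ⟨perp w, perp_ne_zero hw0, ?_, ?_, ?_⟩
    · obtain ⟨c, hc⟩ := h1 (w ᵥ* A) ⟨A, hAmem, rfl⟩
      have : w ⬝ᵥ (A *ᵥ perp w) = 0 := by
        rw [dotProduct_mulVec, hc]
        simp [dot_perp w, smul_dotProduct]
      exact mem_span_perp hw0 this
    · obtain ⟨c, hc⟩ := h1 (w ᵥ* B) ⟨B, hBmem, rfl⟩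
      have : w ⬝ᵥ (B *ᵥ perp w) = 0 := by
        rw [dotProduct_mulVec, hc]
        simp [dot_perp w, smul_dotProduct]
      exact mem_span_perp hw0 this
    · obtain ⟨c, hc⟩ := h1 (w ᵥ* C) ⟨C, hCmem, rfl⟩
      have : w ⬝ᵥ (C *ᵥ perp w) = 0 := by
        rw [dotProduct_mulVec, hc]
        simp [dot_perp w, smul_dotProduct]
      exact mem_span_perp hw0 this
  -- every rank one vecMulVec x y is in 𝒜
  have hvmv : ∀ (x y : V₂), vecMulVec x y ∈ 𝒜 := by
    intro x y
    have hx : x ∈ T := hTtop ▸ Submodule.mem_top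
    have hy : y ∈ T' := hT'top ▸ Submodule.mem_top
    obtain ⟨s, hs, rfl⟩ := hx
    obtain ⟨s', hs', rfl⟩ := hy
    have : vecMulVec (colmap s) (rowmap s') = s * t * s' := by
      rw [htuw, mul_vecMulVec_mul]
      rfl
    rw [this]
    exact hmul _ (hmul _ hs _ ht𝒜) _ hs'
  rw [eq_top_iff]
  intro M _
  rw [matrix_sum_rows M]
  exact Submodule.sum_mem _ fun i _ => hvmv _ _



/-- the contragredient-conjugate representation -/
noncomputable def sg (W : M₂) : M₂ := (adjugate W)ᴴ

lemma sg_def (W : M₂) : sg W = (adjugate W)ᴴ := rfl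

lemma sg_mul (A B : M₂) : sg (A * B) = sg A * sg B := by
  rw [sg, adjugate_mul_distrib, conjTranspose_mul]; rfl

lemma sg_one : sg (1 : M₂) = 1 := by simp [sg]

lemma tr_sg (W : M₂) : trace (sg W) = star (trace W) := by
  rw [sg, trace_conjTranspose]
  congr 1
  rw [adj_eq, trace_sub, trace_smul, trace_one]
  simp [smul_eq_mul]
  ring

lemma sg_irr {A B C : M₂}
    (h : ¬ ∃ v : V₂, v ≠ 0 ∧ (∃ c : ℂ, A *ᵥ v = c • v) ∧ (∃ c : ℂ, B *ᵥ v = c • v) ∧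
      (∃ c : ℂ, C *ᵥ v = c • v)) :
    ¬ ∃ v : V₂, v ≠ 0 ∧ (∃ c : ℂ, sg A *ᵥ v = c • v) ∧ (∃ c : ℂ, sg B *ᵥ v = c • v) ∧
      (∃ c : ℂ, sg C *ᵥ v = c • v) := by
  rintro ⟨v, hv0, hA, hB, hC⟩
  have hw0 : star v ≠ 0 := by
    intro hsv; apply hv0; ext i
    have := congrFun hsv i
    simp at this
    simpa using this
  have key : ∀ (X : M₂), (∃ c : ℂ, sg X *ᵥ v = c • v) → ∃ c : ℂ, X *ᵥ perp (star v) = c • perp (star v) := by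
    rintro X ⟨c, hc⟩
    have h1 : star v ᵥ* adjugate X = star c • star v := by
      have := congrArg star hc
      rw [star_mulVec, sg, conjTranspose_conjTranspose] at this
      rw [this, star_smul]
    have h2 : star v ᵥ* X = (trace X - star c) • star v := by
      have hX : X = trace X • (1:M₂) - adjugate X := by
        rw [adj_eq, sub_sub_cancel]
      calc star v ᵥ* X = star v ᵥ* (trace X • (1:M₂)) - star v ᵥ* adjugate X := by
            conv_lhs => rw [hX]
            exact Matrix.vecMul_sub _ _ _
        _ = trace X • star v - star c • star v := by
            rw [h1]
            congr 1
            ext j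
            fin_cases j <;>
              simp [vecMul, dotProduct, Fin.sum_univ_two, Matrix.smul_apply, Matrix.one_apply] <;>
              ring
        _ = (trace X - star c) • star v := (sub_smul _ _ _).symm
    have h4 : star v ⬝ᵥ (X *ᵥ perp (star v)) = 0 := by
      rw [dotProduct_mulVec, h2, smul_dotProduct, dot_perp, smul_eq_mul, mul_zero]
    exact mem_span_perp hw0 h4
  exact h ⟨perp (star v), perp_ne_zero hw0, key A hA, key B hB, key C hC⟩



lemma eq_zero_of_mulVec_zero {M : M₂} (h : ∀ x : V₂, M *ᵥ x = 0) : M = 0 := by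
  ext i j
  have := congrFun (h (Pi.single j 1)) i
  simpa [mulVec, dotProduct, Pi.single_apply, Finset.sum_ite_eq'] using this

/-- Schur: a matrix commuting with an irreducible triple is scalar -/
lemma commutant_scalar {A B C K : M₂}
    (hirr3 : ¬ ∃ v : V₂, v ≠ 0 ∧ (∃ c : ℂ, A *ᵥ v = c • v) ∧ (∃ c : ℂ, B *ᵥ v = c • v) ∧
      (∃ c : ℂ, C *ᵥ v = c • v))
    (hA : K * A = A * K) (hB : K * B = B * K) (hC : K * C = C * K) :
    ∃ lam : ℂ, K = lam • 1 := by
  obtain ⟨lam, hlam⟩ := Module.End.exists_eigenvalue (Matrix.mulVecLin K)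
  obtain ⟨v, hv⟩ := hlam.exists_hasEigenvector
  refine ⟨lam, ?_⟩
  set K' : M₂ := K - lam • 1 with hK'
  have happ : K *ᵥ v = lam • v := by
    have := hv.apply_eq_smul
    rwa [show (Matrix.mulVecLin K) v = K *ᵥ v from rfl] at this
  have hK'v : K' *ᵥ v = 0 := by
    rw [hK', sub_mulVec, smul_mulVec, one_mulVec, happ, sub_self]
  set T : Submodule ℂ V₂ := LinearMap.ker (Matrix.mulVecLin K') with hT
  have hvT : v ∈ T := by
    simpa [hT, LinearMap.mem_ker, Matrix.mulVecLin_apply] using hK'v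
  by_cases htop : T = ⊤
  · rw [← sub_eq_zero, ← hK']
    apply eq_zero_of_mulVec_zero
    intro x
    have hx : x ∈ T := by rw [htop]; trivial
    simpa [hT, LinearMap.mem_ker, Matrix.mulVecLin_apply] using hx
  · exfalso
    have h1 := onedim htop hv.right hvT
    apply hirr3
    have inv : ∀ (Y : M₂), K * Y = Y * K → K' *ᵥ (Y *ᵥ v) = 0 := by
      intro Y hY
      have hcomm : K' * Y = Y * K' := by
        rw [hK', sub_mul, mul_sub, hY, smul_mul_assoc, mul_smul_comm, one_mul, mul_one]
      rw [mulVec_mulVec, hcomm, ← mulVec_mulVec, hK'v, mulVec_zero]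
    refine ⟨v, hv.right, ?_, ?_, ?_⟩
    · obtain ⟨c, hc⟩ := h1 (A *ᵥ v) (inv A hA); exact ⟨c, hc⟩
    · obtain ⟨c, hc⟩ := h1 (B *ᵥ v) (inv B hB); exact ⟨c, hc⟩
    · obtain ⟨c, hc⟩ := h1 (C *ᵥ v) (inv C hC); exact ⟨c, hc⟩

/-- Schur: a nonzero intertwiner is invertible -/
lemma intertwiner_det_ne_zero {A B C X : M₂} {A' B' C' : M₂}
    (hirr3 : ¬ ∃ v : V₂, v ≠ 0 ∧ (∃ c : ℂ, A *ᵥ v = c • v) ∧ (∃ c : ℂ, B *ᵥ v = c • v) ∧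
      (∃ c : ℂ, C *ᵥ v = c • v))
    (hX0 : X ≠ 0)
    (hA : X * A = A' * X) (hB : X * B = B' * X) (hC : X * C = C' * X) :
    X.det ≠ 0 := by
  intro hdet
  obtain ⟨v, hv0, hv⟩ := Matrix.exists_mulVec_eq_zero_iff.2 hdet
  set T : Submodule ℂ V₂ := LinearMap.ker (Matrix.mulVecLin X) with hT
  have hvT : v ∈ T := by
    simpa [hT, LinearMap.mem_ker, Matrix.mulVecLin_apply] using hv
  have htop : T ≠ ⊤ := by
    intro h
    refine hX0 (eq_zero_of_mulVec_zero fun x => ?_)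
    have hx : x ∈ T := by rw [h]; trivial
    simpa [hT, LinearMap.mem_ker, Matrix.mulVecLin_apply] using hx
  have h1 := onedim htop hv0 hvT
  apply hirr3
  have inv : ∀ (Y Y' : M₂), X * Y = Y' * X → X *ᵥ (Y *ᵥ v) = 0 := by
    intro Y Y' hY
    rw [mulVec_mulVec, hY, ← mulVec_mulVec, hv, mulVec_zero]
  refine ⟨v, hv0, ?_, ?_, ?_⟩
  · obtain ⟨c, hc⟩ := h1 (A *ᵥ v) (inv A A' hA); exact ⟨c, hc⟩
  · obtain ⟨c, hc⟩ := h1 (B *ᵥ v) (inv B B' hB); exact ⟨c, hc⟩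
  · obtain ⟨c, hc⟩ := h1 (C *ᵥ v) (inv C C' hC); exact ⟨c, hc⟩



lemma trace_mul_single (M : M₂) (i j : Fin 2) :
    trace (M * single j i 1) = M i j := by
  fin_cases i <;> fin_cases j <;>
    simp [trace_fin_two, mul_apply, Matrix.single, Fin.sum_univ_two]

theorem backward_gen (A B C : M₂) (hdA : A.det = 1) (hdB : B.det = 1) (hdC : C.det = 1)
    (htr : ∀ W ∈ Submonoid.closure ({A, B, C} : Set M₂), (trace W).im = 0)
    (hirr3 : ¬ ∃ v : V₂, v ≠ 0 ∧ (∃ c : ℂ, A *ᵥ v = c • v) ∧ (∃ c : ℂ, B *ᵥ v = c • v) ∧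
      (∃ c : ℂ, C *ᵥ v = c • v)) :
    ∃ H : M₂, H.IsHermitian ∧ H.det ≠ 0 ∧
      Aᴴ * H * A = H ∧ Bᴴ * H * B = H ∧ Cᴴ * H * C = H := by
  classical
  set s : Set M₂ := ((Submonoid.closure ({A, B, C} : Set M₂) : Submonoid M₂) : Set M₂) with hs
  set ps : Set (M₂ × M₂) := (fun W => (W, sg W)) '' s with hps
  set SP : Submodule ℂ (M₂ × M₂) := Submodule.span ℂ ps with hSP
  have hAs : A ∈ s := Submonoid.subset_closure (by simp)
  have hBs : B ∈ s := Submonoid.subset_closure (by simp)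
  have hCs : C ∈ s := Submonoid.subset_closure (by simp)
  have hpsmul : ∀ x ∈ ps, ∀ y ∈ ps, x * y ∈ ps := by
    rintro _ ⟨W, hW, rfl⟩ _ ⟨V, hV, rfl⟩
    refine ⟨W * V, mul_mem hW hV, ?_⟩
    show (W * V, sg (W * V)) = (W, sg W) * (V, sg V)
    rw [Prod.mk_mul_mk, sg_mul]
  have hSPmul : ∀ x ∈ SP, ∀ y ∈ SP, x * y ∈ SP := span_mul_mem hpsmul
  have hSPone : ((1 : M₂), (1 : M₂)) ∈ SP :=
    Submodule.subset_span ⟨1, one_mem _, by show ((1:M₂), sg (1:M₂)) = (1, 1); rw [sg_one]⟩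
  have htreq : ∀ p ∈ SP, trace p.1 = trace p.2 := by
    intro p hp
    induction hp using Submodule.span_induction with
    | mem x hx =>
      obtain ⟨W, hW, rfl⟩ := hx
      rw [tr_sg]
      exact (Complex.conj_eq_iff_im.2 (htr W hW)).symm
    | zero => simp
    | add x y hx hy ihx ihy => simp only [Prod.fst_add, Prod.snd_add, trace_add, ihx, ihy]
    | smul c x hx ihx => simp only [Prod.smul_fst, Prod.smul_snd, trace_smul, ihx]
  have hmap1 : SP.map (LinearMap.fst ℂ M₂ M₂) = ⊤ := by
    rw [hSP, Submodule.map_span]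
    have himg : (LinearMap.fst ℂ M₂ M₂) '' ps = s := by
      rw [hps, Set.image_image]; simp
    rw [himg, hs]
    exact burnside2 A B C hirr3
  have hmap2 : SP.map (LinearMap.snd ℂ M₂ M₂) = ⊤ := by
    rw [hSP, Submodule.map_span]
    have himg : (LinearMap.snd ℂ M₂ M₂) '' ps = sg '' s := by
      rw [hps, Set.image_image]; simp
    rw [himg]
    apply top_unique
    have hsub : ((Submonoid.closure {sg A, sg B, sg C} : Submonoid M₂) : Set M₂)
        ⊆ sg '' s := by
      intro x hx
      induction hx using Submonoid.closure_induction with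
      | mem y hy =>
        rcases hy with h | h | h
        · exact ⟨A, hAs, h.symm⟩
        · exact ⟨B, hBs, h.symm⟩
        · exact ⟨C, hCs, h.symm⟩
      | one => exact ⟨1, one_mem _, sg_one⟩
      | mul x y hx hy ihx ihy =>
        obtain ⟨W, hW, rfl⟩ := ihx
        obtain ⟨V, hV, rfl⟩ := ihy
        exact ⟨W * V, mul_mem hW hV, sg_mul W V⟩
    calc (⊤ : Submodule ℂ M₂)
        = Submodule.span ℂ ((Submonoid.closure {sg A, sg B, sg C} : Submonoid M₂) : Set M₂) :=
          (burnside2 _ _ _ (sg_irr hirr3)).symm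
      _ ≤ Submodule.span ℂ (sg '' s) := Submodule.span_mono hsub
  have hsurj1 : ∀ a : M₂, ∃ b, (a, b) ∈ SP := by
    intro a
    have : a ∈ SP.map (LinearMap.fst ℂ M₂ M₂) := by rw [hmap1]; trivial
    obtain ⟨⟨p1, p2⟩, hp, hpa⟩ := this
    simp at hpa
    subst hpa
    exact ⟨p2, hp⟩
  have hsurj2 : ∀ b : M₂, ∃ a, (a, b) ∈ SP := by
    intro b
    have : b ∈ SP.map (LinearMap.snd ℂ M₂ M₂) := by rw [hmap2]; trivial
    obtain ⟨⟨p1, p2⟩, hp, hpb⟩ := this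
    simp at hpb
    subst hpb
    exact ⟨p1, hp⟩
  have hker : ∀ b : M₂, ((0 : M₂), b) ∈ SP → b = 0 := by
    intro b hb
    ext i j
    obtain ⟨a', ha'⟩ := hsurj2 (single j i 1)
    have hm := hSPmul _ hb _ ha'
    have ht := htreq _ hm
    simp only [Prod.mk_mul_mk, zero_mul] at ht
    rw [trace_zero, trace_mul_single] at ht
    simpa using ht.symm
  choose φ hφ using hsurj1
  have huniq : ∀ a b, (a, b) ∈ SP → b = φ a := by
    intro a b hb
    have h0 := SP.sub_mem hb (hφ a)
    have h1 : ((0 : M₂), b - φ a) ∈ SP := by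
      simpa [Prod.mk_sub_mk] using h0
    have := hker _ h1
    rwa [sub_eq_zero] at this
  have φmul : ∀ x y, φ (x * y) = φ x * φ y := by
    intro x y
    exact (huniq (x * y) (φ x * φ y)
      (by simpa [Prod.mk_mul_mk] using hSPmul _ (hφ x) _ (hφ y))).symm
  have φadd : ∀ x y, φ (x + y) = φ x + φ y := by
    intro x y
    exact (huniq (x + y) (φ x + φ y)
      (by simpa [Prod.mk_add_mk] using SP.add_mem (hφ x) (hφ y))).symm
  have φsmul : ∀ (c : ℂ) x, φ (c • x) = c • φ x := by
    intro c x
    exact (huniq (c • x) (c • φ x)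
      (by simpa [Prod.smul_mk] using SP.smul_mem c (hφ x))).symm
  have φzero : φ 0 = 0 := (huniq 0 0 (SP.zero_mem)).symm
  have φA : φ A = sg A := (huniq A (sg A) (Submodule.subset_span ⟨A, hAs, rfl⟩)).symm
  have φB : φ B = sg B := (huniq B (sg B) (Submodule.subset_span ⟨B, hBs, rfl⟩)).symm
  have φC : φ C = sg C := (huniq C (sg C) (Submodule.subset_span ⟨C, hCs, rfl⟩)).symm
  have φtrace : ∀ a, trace (φ a) = trace a := fun a => (htreq _ (hφ a)).symm
  -- the idempotent E and vector w
  set E : M₂ := φ (single 0 0 1) with hE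
  have hEE : E * E = E := by
    rw [hE, ← φmul, single_mul_single_same, mul_one]
  have htrE : trace E = 1 := by
    rw [hE, φtrace]
    simp [trace_fin_two, Matrix.single]
  have hE0 : E ≠ 0 := by
    intro h; rw [h, trace_zero] at htrE; exact one_ne_zero htrE.symm
  obtain ⟨u, hu⟩ : ∃ u : V₂, E *ᵥ u ≠ 0 := by
    by_contra hcon
    push_neg at hcon
    exact hE0 (eq_zero_of_mulVec_zero hcon)
  set w : V₂ := E *ᵥ u with hw
  have hEw : E *ᵥ w = w := by rw [hw, mulVec_mulVec, hEE]
  set M₀ : M₂ := vecMulVec w (Pi.single 0 1) with hM₀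
  set X : M₂ := ∑ k : Fin 2, φ (single k 0 1) * M₀ * single 0 k 1 with hX
  -- key intertwining on basis matrices
  have h1 : ∀ i j : Fin 2,
      X * single i j 1 = φ (single i 0 1) * M₀ * single 0 j 1 := by
    intro i j
    have mo1 : ∀ jj : Fin 2, single (0 : Fin 2) (1 : Fin 2) (1 : ℂ)
        * single 0 jj 1 = 0 := fun jj => single_mul_single_of_ne 1 0 1 0 (by decide) 1
    have mo2 : ∀ jj : Fin 2, single (0 : Fin 2) (0 : Fin 2) (1 : ℂ)
        * single 1 jj 1 = 0 := fun jj => single_mul_single_of_ne 1 0 0 1 (by decide) 1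
    rw [hX, Fin.sum_univ_two, add_mul]
    simp only [mul_assoc]
    rcases (by decide : ∀ i : Fin 2, i = 0 ∨ i = 1) i with hi | hi <;> subst hi
    · rw [single_mul_single_same, one_mul, mo1, mul_zero, mul_zero, add_zero]
    · rw [mo2, single_mul_single_same, one_mul, mul_zero, mul_zero, zero_add]
  have h2 : ∀ i j : Fin 2,
      φ (single i j 1) * X = φ (single i 0 1) * M₀ * single 0 j 1 := by
    intro i j
    rw [hX, Finset.mul_sum, Fin.sum_univ_two]
    simp only [mul_assoc]
    rw [← mul_assoc (φ (single i j 1)) (φ (single 0 0 1)), ← φmul,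
      ← mul_assoc (φ (single i j 1)) (φ (single 1 0 1)), ← φmul]
    have mo3 : ∀ ii : Fin 2, single ii (0 : Fin 2) (1 : ℂ)
        * single 1 0 1 = 0 := fun ii => single_mul_single_of_ne 1 ii 0 1 (by decide) 1
    have mo4 : ∀ ii : Fin 2, single ii (1 : Fin 2) (1 : ℂ)
        * single 0 0 1 = 0 := fun ii => single_mul_single_of_ne 1 ii 1 0 (by decide) 1
    rcases (by decide : ∀ i : Fin 2, i = 0 ∨ i = 1) j with hj | hj <;> subst hj
    · rw [single_mul_single_same, one_mul, mo3, φzero, zero_mul, add_zero]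
    · rw [mo4, single_mul_single_same, one_mul, φzero, zero_mul, zero_add]
  have hXm : ∀ m : M₂, X * m = φ m * X := by
    intro m
    have hrepr : m = ∑ i : Fin 2, ∑ j : Fin 2, (m i j) • single i j (1 : ℂ) := by
      conv_lhs => rw [matrix_eq_sum_single m]
      refine Finset.sum_congr rfl fun i _ => Finset.sum_congr rfl fun j _ => ?_
      rw [smul_single, smul_eq_mul, mul_one]
    have hφm : φ m = ∑ i : Fin 2, ∑ j : Fin 2, (m i j) • φ (single i j (1 : ℂ)) := by
      conv_lhs => rw [hrepr]
      rw [show (∑ i : Fin 2, ∑ j : Fin 2, (m i j) • single i j (1:ℂ))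
          = ∑ p : Fin 2 × Fin 2, (m p.1 p.2) • single p.1 p.2 (1:ℂ) by
            rw [← Finset.sum_product']; rfl]
      rw [show (∑ i : Fin 2, ∑ j : Fin 2, (m i j) • φ (single i j (1:ℂ)))
          = ∑ p : Fin 2 × Fin 2, (m p.1 p.2) • φ (single p.1 p.2 (1:ℂ)) by
            rw [← Finset.sum_product']; rfl]
      induction (Finset.univ : Finset (Fin 2 × Fin 2)) using Finset.induction with
      | empty => simpa using φzero
      | insert _ _ hx ih => rw [Finset.sum_insert hx, Finset.sum_insert hx, φadd, φsmul, ih]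
    calc X * m = ∑ i : Fin 2, ∑ j : Fin 2, (m i j) • (X * single i j 1) := by
          conv_lhs => rw [hrepr]
          rw [Finset.mul_sum]
          refine Finset.sum_congr rfl fun i _ => ?_
          rw [Finset.mul_sum]
          refine Finset.sum_congr rfl fun j _ => ?_
          rw [Matrix.mul_smul]
      _ = ∑ i : Fin 2, ∑ j : Fin 2, (m i j) • (φ (single i j 1) * X) := by
          refine Finset.sum_congr rfl fun i _ => Finset.sum_congr rfl fun j _ => ?_
          rw [h1, h2]
      _ = φ m * X := by
          rw [hφm, Finset.sum_mul]
          refine Finset.sum_congr rfl fun i _ => ?_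
          rw [Finset.sum_mul]
          refine Finset.sum_congr rfl fun j _ => ?_
          rw [Matrix.smul_mul]
  have hXA : X * A = sg A * X := by rw [hXm A, φA]
  have hXB : X * B = sg B * X := by rw [hXm B, φB]
  have hXC : X * C = sg C * X := by rw [hXm C, φC]
  -- X is nonzero
  have hvmv : ∀ (x : V₂), M₀ *ᵥ x = (Pi.single 0 1 ⬝ᵥ x) • w := by
    intro x
    ext i
    simp [hM₀, vecMulVec, mulVec, dotProduct, Fin.sum_univ_two, Pi.single_apply]
    ring
  have hXe : X *ᵥ Pi.single 0 1 = w := by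
    rw [hX]
    rw [show (∑ k : Fin 2, φ (single k 0 1) * M₀ * single 0 k 1)
        = φ (single 0 0 1) * M₀ * single 0 0 1
          + φ (single 1 0 1) * M₀ * single 0 1 1 from Fin.sum_univ_two _]
    rw [add_mulVec]
    have e1 : (single 0 0 (1:ℂ) : M₂) *ᵥ Pi.single 0 1 = Pi.single 0 1 := by
      ext i; fin_cases i <;> simp [mulVec, dotProduct, Fin.sum_univ_two, Matrix.single, Pi.single_apply]
    have e2 : (single 0 1 (1:ℂ) : M₂) *ᵥ Pi.single 0 1 = 0 := by
      ext i; fin_cases i <;> simp [mulVec, dotProduct, Fin.sum_univ_two, Matrix.single, Pi.single_apply]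
    rw [← mulVec_mulVec, ← mulVec_mulVec, e1, ← mulVec_mulVec, ← mulVec_mulVec, e2,
      mulVec_zero, mulVec_zero, add_zero, hvmv]
    simp [dotProduct, Pi.single_apply, Fin.sum_univ_two]
    convert hEw using 1
    ext i; fin_cases i <;> simp [hE, mulVec, dotProduct, Fin.sum_univ_two]
  have hX0 : X ≠ 0 := by
    intro h
    rw [h, zero_mulVec] at hXe
    exact hu hXe.symm
  have hdX : X.det ≠ 0 := intertwiner_det_ne_zero hirr3 hX0 hXA hXB hXC
  have hsgH : ∀ g : M₂, g.det = 1 → gᴴ * sg g = 1 := by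
    intro g hg
    rw [sg_def]
    calc gᴴ * (adjugate g)ᴴ = (adjugate g * g)ᴴ := (conjTranspose_mul _ _).symm
      _ = 1 := by rw [adjugate_mul, hg, one_smul, conjTranspose_one]
  have hsgH2 : ∀ g : M₂, g.det = 1 → sg g * gᴴ = 1 := by
    intro g hg
    rw [sg_def]
    calc (adjugate g)ᴴ * gᴴ = (g * adjugate g)ᴴ := (conjTranspose_mul _ _).symm
      _ = 1 := by rw [mul_adjugate, hg, one_smul, conjTranspose_one]
  have hfix : ∀ g : M₂, g.det = 1 → X * g = sg g * X → gᴴ * X * g = X := by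
    intro g hg hXg
    rw [mul_assoc, hXg, ← mul_assoc, hsgH g hg, one_mul]
  have hfixA := hfix A hdA hXA
  have hfixB := hfix B hdB hXB
  have hfixC := hfix C hdC hXC
  -- Xᴴ intertwines in the same way
  have hXgH : ∀ g : M₂, g.det = 1 → gᴴ * X * g = X → Xᴴ * g = sg g * Xᴴ := by
    intro g hg hgf
    have h3 := congrArg conjTranspose hgf
    rw [conjTranspose_mul, conjTranspose_mul, conjTranspose_conjTranspose] at h3
    -- h3 : gᴴ * (Xᴴ * gᴴᴴ)?  careful
    rw [← mul_assoc] at h3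
    -- h3 : gᴴ * Xᴴ * g = Xᴴ  (need to check)
    calc Xᴴ * g = (sg g * gᴴ) * (Xᴴ * g) := by rw [hsgH2 g hg, one_mul]
      _ = sg g * (gᴴ * Xᴴ * g) := by noncomm_ring
      _ = sg g * Xᴴ := by rw [h3]
  have hadj_adj : ∀ g : M₂, adjugate (sg g) = gᴴ := by
    intro g
    rw [sg_def, ← adjugate_conjTranspose]
    have := Matrix.adjugate_adjugate g (by simp : Fintype.card (Fin 2) ≠ 1)
    rw [this]
    norm_num
  have hYrel : ∀ g : M₂, X * g = sg g * X → adjugate X * gᴴ = adjugate g * adjugate X := by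
    intro g hXg
    have h4 := congrArg adjugate hXg
    rw [adjugate_mul_distrib, adjugate_mul_distrib, hadj_adj] at h4
    exact h4.symm
  have htrreal : ∀ g : M₂, g ∈ s → star (trace g) = trace g :=
    fun g hg => Complex.conj_eq_iff_im.2 (htr g hg)
  have hadjH : ∀ g : M₂, g ∈ s → (adjugate g)ᴴ = trace g • (1 : M₂) - gᴴ := by
    intro g hg
    rw [adj_eq, conjTranspose_sub, conjTranspose_smul, conjTranspose_one, htrreal g hg]
  set K : M₂ := adjugate X * Xᴴ with hK
  have hcomm : ∀ g : M₂, g ∈ s → g.det = 1 → X * g = sg g * X → K * g = g * K := by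
    intro g hg hdg hXg
    have e1 : Xᴴ * g = sg g * Xᴴ := hXgH g hdg (hfix g hdg hXg)
    calc K * g = adjugate X * (Xᴴ * g) := by rw [hK, mul_assoc]
      _ = adjugate X * (sg g * Xᴴ) := by rw [e1]
      _ = (adjugate X * (adjugate g)ᴴ) * Xᴴ := by rw [sg_def]; noncomm_ring
      _ = (adjugate X * (trace g • (1 : M₂) - gᴴ)) * Xᴴ := by rw [hadjH g hg]
      _ = (trace g • adjugate X - adjugate X * gᴴ) * Xᴴ := by
            congr 1
            rw [mul_sub, Matrix.mul_smul, mul_one]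
      _ = (trace g • adjugate X - adjugate g * adjugate X) * Xᴴ := by rw [hYrel g hXg]
      _ = ((trace g • (1 : M₂) - adjugate g) * adjugate X) * Xᴴ := by
            congr 1
            rw [sub_mul, Matrix.smul_mul, one_mul]
      _ = (g * adjugate X) * Xᴴ := by rw [adj_eq, sub_sub_cancel]
      _ = g * K := by rw [hK]; noncomm_ring
  obtain ⟨lam, hlam⟩ := commutant_scalar hirr3 (hcomm A hAs hdA hXA) (hcomm B hBs hdB hXB)
    (hcomm C hCs hdC hXC)
  set lam' : ℂ := lam / X.det with hlam'
  have hXH : Xᴴ = lam' • X := by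
    have h5 : X * (adjugate X * Xᴴ) = X * (lam • 1) := by rw [← hK, hlam]
    rw [← mul_assoc, mul_adjugate] at h5
    have h6 : X.det • Xᴴ = lam • X := by
      rw [Matrix.smul_mul, one_mul] at h5
      rw [h5, Matrix.mul_smul, mul_one]
    calc Xᴴ = (X.det)⁻¹ • (X.det • Xᴴ) := by rw [smul_smul, inv_mul_cancel₀ hdX, one_smul]
      _ = (X.det)⁻¹ • (lam • X) := by rw [h6]
      _ = lam' • X := by rw [smul_smul, hlam', div_eq_mul_inv, mul_comm]
  have hlam'1 : star lam' * lam' = 1 := by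
    have h6 := congrArg conjTranspose hXH
    rw [conjTranspose_smul, conjTranspose_conjTranspose, hXH, smul_smul] at h6
    obtain ⟨i, j, hij⟩ : ∃ i j, X i j ≠ 0 := by
      by_contra hcon
      push_neg at hcon
      exact hX0 (by ext i j; simpa using hcon i j)
    have h7 := congrFun (congrFun h6 i) j
    simp only [Matrix.smul_apply, smul_eq_mul] at h7
    -- h7 : X i j = (star lam' * lam') * X i j
    have h8 : (star lam' * lam' - 1) * X i j = 0 := by linear_combination -h7
    rcases mul_eq_zero.1 h8 with h9 | h9
    · linear_combination h9
    · exact absurd h9 hij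
  obtain ⟨mu, hmu⟩ := IsAlgClosed.exists_pow_nat_eq (k := ℂ) lam' (n := 2) (by norm_num)
  have hmusq : mu * mu = lam' := by rw [← hmu]; ring
  have hmu1 : star mu * mu = 1 := by
    have h9 : (star mu * mu) * (star mu * mu) = 1 := by
      calc (star mu * mu) * (star mu * mu) = (star mu * star mu) * (mu * mu) := by ring
        _ = star (mu * mu) * (mu * mu) := by rw [star_mul']
        _ = star lam' * lam' := by rw [hmusq]
        _ = 1 := hlam'1
    have h10 : star mu * mu = ((Complex.normSq mu : ℝ) : ℂ) := by
      rw [mul_comm, Complex.star_def, Complex.mul_conj]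
    rw [h10] at h9 ⊢
    rw [← Complex.ofReal_mul] at h9
    have h11 : Complex.normSq mu * Complex.normSq mu = 1 := by
      exact_mod_cast h9
    have h12 : Complex.normSq mu = 1 := by
      nlinarith [Complex.normSq_nonneg mu]
    rw [h12]
    norm_num
  have hlamne : lam' ≠ 0 := by
    intro h
    rw [h, mul_zero] at hlam'1
    exact one_ne_zero hlam'1.symm
  refine ⟨mu • X, ?_, ?_, ?_, ?_, ?_⟩
  · show (mu • X)ᴴ = mu • X
    rw [conjTranspose_smul, hXH, smul_smul]
    congr 1
    calc star mu * lam' = star mu * (mu * mu) := by rw [hmusq]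
      _ = (star mu * mu) * mu := by ring
      _ = mu := by rw [hmu1, one_mul]
  · rw [Matrix.det_smul]
    simp only [Fintype.card_fin]
    intro h
    rcases mul_eq_zero.1 h with h9 | h9
    · rw [show mu ^ 2 = lam' from by rw [← hmusq]; ring] at h9
      exact hlamne h9
    · exact hdX h9
  · rw [Matrix.mul_smul, Matrix.smul_mul, hfixA]
  · rw [Matrix.mul_smul, Matrix.smul_mul, hfixB]
  · rw [Matrix.mul_smul, Matrix.smul_mul, hfixC]

/-- For an irreducible group generated by three elements of `SL(2,ℂ)`, unitarity is equivalent
to the seven Fricke traces being real. -/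
theorem unitary_iff_real_traces
    (P Q R : Matrix.SpecialLinearGroup (Fin 2) ℂ)
    (G : Subgroup (Matrix.SpecialLinearGroup (Fin 2) ℂ))
    (hG : G = Subgroup.closure {P, Q, R})
    (hirr : IsIrreducibleSubgroup G) :
    IsUnitarySubgroup G ↔
      ((trSL P).im = 0 ∧ (trSL Q).im = 0 ∧ (trSL R).im = 0 ∧
       (trSL (P * Q)).im = 0 ∧ (trSL (Q * R)).im = 0 ∧ (trSL (P * R)).im = 0 ∧
       (trSL (P * Q * R)).im = 0) := by
  classical
  have hPG : P ∈ G := hG ▸ Subgroup.subset_closure (by simp)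
  have hQG : Q ∈ G := hG ▸ Subgroup.subset_closure (by simp)
  have hRG : R ∈ G := hG ▸ Subgroup.subset_closure (by simp)
  have detP : ((P : M₂)).det = 1 := P.2
  have detQ : ((Q : M₂)).det = 1 := Q.2
  have detR : ((R : M₂)).det = 1 := R.2
  constructor
  · -- forward direction
    rintro ⟨H, hherm, hdet, hfix⟩
    have hHu : IsUnit H.det := isUnit_iff_ne_zero.2 hdet
    have key : ∀ g : Matrix.SpecialLinearGroup (Fin 2) ℂ, g ∈ G →
        (Matrix.trace (g : M₂)).im = 0 := by
      intro g hg
      have h1 := hfix g hg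
      have hdg : ((g : M₂)).det = 1 := g.2
      have h2 : ((g : M₂))ᴴ * H = H * adjugate (g : M₂) := by
        have h3 := congrArg (fun M => M * adjugate (g : M₂)) h1
        beta_reduce at h3
        rwa [mul_assoc ((g : M₂)ᴴ * H), mul_adjugate, hdg, one_smul, mul_one] at h3
      have h4 : ((g : M₂))ᴴ = H * adjugate (g : M₂) * H⁻¹ := by
        rw [← h2, mul_assoc, Matrix.mul_nonsing_inv _ hHu, mul_one]
      have h5 : Matrix.trace (((g : M₂))ᴴ) = Matrix.trace (adjugate (g : M₂)) := by
        rw [h4, trace_mul_comm, ← mul_assoc, Matrix.nonsing_inv_mul _ hHu, one_mul]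
      rw [trace_conjTranspose, adj_eq, trace_sub, trace_smul, trace_one] at h5
      have h6 : star (Matrix.trace (g : M₂)) = Matrix.trace (g : M₂) := by
        rw [h5]; simp [smul_eq_mul]; ring
      exact Complex.conj_eq_iff_im.1 h6
    refine ⟨key P hPG, key Q hQG, key R hRG, ?_, ?_, ?_, ?_⟩
    · have := key (P * Q) (mul_mem hPG hQG)
      simpa [trSL] using this
    · have := key (Q * R) (mul_mem hQG hRG)
      simpa [trSL] using this
    · have := key (P * R) (mul_mem hPG hRG)
      simpa [trSL] using this
    · have := key (P * Q * R) (mul_mem (mul_mem hPG hQG) hRG)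
      simpa [trSL] using this
  · -- backward direction
    rintro ⟨t1, t2, t3, t4, t5, t6, t7⟩
    have hirr3 : ¬ ∃ v : V₂, v ≠ 0 ∧ (∃ c : ℂ, (P : M₂) *ᵥ v = c • v) ∧
        (∃ c : ℂ, (Q : M₂) *ᵥ v = c • v) ∧ (∃ c : ℂ, (R : M₂) *ᵥ v = c • v) := by
      rintro ⟨v, hv0, hP, hQ, hR⟩
      apply hirr
      refine ⟨v, hv0, ?_⟩
      intro g hg
      rw [hG] at hg
      induction hg using Subgroup.closure_induction with
      | mem x hx =>
        simp only [Set.mem_insert_iff, Set.mem_singleton_iff] at hx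
        rcases hx with rfl | rfl | rfl
        exacts [hP, hQ, hR]
      | one => exact ⟨1, by simp⟩
      | mul x y hx hy ihx ihy =>
        obtain ⟨cx, hcx⟩ := ihx
        obtain ⟨cy, hcy⟩ := ihy
        refine ⟨cx * cy, ?_⟩
        rw [Matrix.SpecialLinearGroup.coe_mul, ← mulVec_mulVec, hcy, mulVec_smul, hcx,
          smul_smul, mul_comm]
      | inv x hx ihx =>
        obtain ⟨c, hc⟩ := ihx
        refine ⟨Matrix.trace (x : M₂) - c, ?_⟩
        rw [Matrix.SpecialLinearGroup.coe_inv, adj_eq, sub_mulVec, smul_mulVec,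
          one_mulVec, hc, sub_smul]
    have htrclosure : ∀ W ∈ Submonoid.closure ({(P : M₂), (Q : M₂), (R : M₂)} : Set M₂),
        (Matrix.trace W).im = 0 := by
      intro W hW
      obtain ⟨l, hl, hlp⟩ := Submonoid.exists_list_of_mem_closure hW
      rw [← hlp]
      refine traces_real detP detQ detR t1 t2 t3 ?_ ?_ ?_ ?_ l.length l le_rfl ?_
      · simpa [trSL] using t4
      · simpa [trSL] using t5
      · simpa [trSL] using t6
      · simpa [trSL] using t7
      · intro x hx
        have := hl x hx
        simpa [Set.mem_insert_iff, Set.mem_singleton_iff] using this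
    obtain ⟨H, hherm, hdetH, hfP, hfQ, hfR⟩ :=
      backward_gen (P : M₂) (Q : M₂) (R : M₂) detP detQ detR htrclosure hirr3
    refine ⟨H, hherm, hdetH, ?_⟩
    intro g hg
    rw [hG] at hg
    induction hg using Subgroup.closure_induction with
    | mem x hx =>
      simp only [Set.mem_insert_iff, Set.mem_singleton_iff] at hx
      rcases hx with rfl | rfl | rfl
      exacts [hfP, hfQ, hfR]
    | one => simp
    | mul x y hx hy ihx ihy =>
      rw [Matrix.SpecialLinearGroup.coe_mul, conjTranspose_mul]
      calc (y : M₂)ᴴ * (x : M₂)ᴴ * H * ((x : M₂) * (y : M₂))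
          = (y : M₂)ᴴ * ((x : M₂)ᴴ * H * (x : M₂)) * (y : M₂) := by noncomm_ring
        _ = (y : M₂)ᴴ * H * (y : M₂) := by rw [ihx]
        _ = H := ihy
    | inv x hx ihx =>
      rw [Matrix.SpecialLinearGroup.coe_inv]
      have hdx : ((x : M₂)).det = 1 := x.2
      calc (adjugate (x : M₂))ᴴ * H * adjugate (x : M₂)
          = (adjugate (x : M₂))ᴴ * ((x : M₂)ᴴ * H * (x : M₂)) * adjugate (x : M₂) := by
            rw [ihx]
        _ = ((x : M₂) * adjugate (x : M₂))ᴴ * H * ((x : M₂) * adjugate (x : M₂)) := by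
            rw [conjTranspose_mul]; noncomm_ring
        _ = H := by rw [mul_adjugate, hdx, one_smul, conjTranspose_one, one_mul, mul_one]
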